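/- arXiv:1703.03262 — 2 statements merged into one kernel-verified Lean document; each statement's English description precedes it below -/
import Mathlib

section
/- Let φ be a CNF formula over n ≥ 1 variables and let G(φ) be the associated symmetric two-player game. If selecting one literal ℓ^i ∈ {+x^i, −x^i} for each variable x^i gives an assignment satisfying φ, and μ is the uniform distribution on the n actions {ℓ^1,…,ℓ^n} ⊆ Σ, then the mixed strategy profile (μ, μ) is both a Nash equilibrium of G(φ) and envy-proof in G(φ). -/
open Finset

variable {α β : Type*}

/-- Expected utility of `u` under the product of mixed strategies `p` and `q`. -/
def EU [Fintype α] [Fintype β] (u : α → β → ℝ) (p : α → ℝ) (q : β → ℝ) : ℝ :=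
  ∑ a, ∑ b, p a * q b * u a b

/-- `p` is a probability distribution (mixed strategy). -/
def IsMixed [Fintype α] (p : α → ℝ) : Prop :=
  (∀ a, 0 ≤ p a) ∧ ∑ a, p a = 1

/-- The pure action `a` viewed as a mixed strategy. -/
def pureStrat [DecidableEq α] (a : α) : α → ℝ :=
  fun a' => if a' = a then 1 else 0

/-- `(p,q)` is a Nash equilibrium of the two-player game `({u0,u1},{α,β})`. -/
def IsNash [Fintype α] [Fintype β] [DecidableEq α] [DecidableEq β]
    (u0 u1 : α → β → ℝ) (p : α → ℝ) (q : β → ℝ) : Prop :=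
  (∀ a' : α, EU u0 (pureStrat a') q ≤ EU u0 p q) ∧
  (∀ b' : β, EU u1 p (pureStrat b') ≤ EU u1 p q)

/-- `(p,q)` is immune in the two-player game `({u0,u1},{α,β})`. -/
def IsImmune [Fintype α] [Fintype β] [DecidableEq α] [DecidableEq β]
    (u0 u1 : α → β → ℝ) (p : α → ℝ) (q : β → ℝ) : Prop :=
  (∀ a' : α, EU u1 (pureStrat a') q ≥ EU u1 p q) ∧
  (∀ b' : β, EU u0 p (pureStrat b') ≥ EU u0 p q)

/-- `(p,q)` is envy-proof in the two-player game `({u0,u1},{α,β})`. -/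
def IsEnvyProof [Fintype α] [Fintype β] [DecidableEq α] [DecidableEq β]
    (u0 u1 : α → β → ℝ) (p : α → ℝ) (q : β → ℝ) : Prop :=
  (∀ a' : α, EU u0 (pureStrat a') q - EU u0 p q ≤ EU u1 (pureStrat a') q - EU u1 p q) ∧
  (∀ b' : β, EU u1 p (pureStrat b') - EU u1 p q ≤ EU u0 p (pureStrat b') - EU u0 p q)

/-- Literals over `n` variables: a variable index together with a sign. -/
abbrev Lit (n : ℕ) := Fin n × Bool

/-- The negation of a literal. -/
def negLit {n : ℕ} (l : Lit n) : Lit n := (l.1, !l.2)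

/-- The common action set `Σ = V ∪ L ∪ C ∪ {f}` of the game `G(φ)`, where `C` is the
clause set of the CNF formula `φ`: variables, literals, clauses of `φ`, and a default
action `f`. -/
abbrev Act (n : ℕ) (C : Finset (Finset (Lit n))) :=
  Fin n ⊕ (Lit n ⊕ ({c : Finset (Lit n) // c ∈ C} ⊕ Unit))

/-- The default action `f`. -/
def fAct (n : ℕ) (C : Finset (Finset (Lit n))) : Act n C := Sum.inr (Sum.inr (Sum.inr ()))

/-- Player 0's utility in the game `G(φ)` (with `β = -n`); player 1's utility is
`fun x y => gu n C y x` by symmetry. -/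
def gu (n : ℕ) (C : Finset (Finset (Lit n))) : Act n C → Act n C → ℝ
  -- (var, ·)
  | Sum.inl _, Sum.inl _ => -(n : ℝ)
  | Sum.inl i, Sum.inr (Sum.inl l) => if l.1 = i then 0 else (n : ℝ)
  | Sum.inl _, Sum.inr (Sum.inr (Sum.inl _)) => -(n : ℝ)
  | Sum.inl _, Sum.inr (Sum.inr (Sum.inr _)) => (n : ℝ) + 1
  -- (lit, ·)
  | Sum.inr (Sum.inl l), Sum.inl i =>
      if l.1 = i then 2 * ((n : ℝ) - 1) else (n : ℝ) - 2
  | Sum.inr (Sum.inl l0), Sum.inr (Sum.inl l1) =>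
      if l0 = negLit l1 then -(n : ℝ) else (n : ℝ) - 1
  | Sum.inr (Sum.inl l), Sum.inr (Sum.inr (Sum.inl c)) =>
      if l ∈ c.1 then 2 * ((n : ℝ) - 1) else (n : ℝ) - 2
  | Sum.inr (Sum.inl _), Sum.inr (Sum.inr (Sum.inr _)) => (n : ℝ) - 1
  -- (cls, ·)
  | Sum.inr (Sum.inr (Sum.inl _)), Sum.inl _ => -(n : ℝ)
  | Sum.inr (Sum.inr (Sum.inl c)), Sum.inr (Sum.inl l) =>
      if l ∈ c.1 then 0 else (n : ℝ)
  | Sum.inr (Sum.inr (Sum.inl _)), Sum.inr (Sum.inr (Sum.inl _)) => -(n : ℝ)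
  | Sum.inr (Sum.inr (Sum.inl _)), Sum.inr (Sum.inr (Sum.inr _)) => (n : ℝ) + 1
  -- (f, ·)
  | Sum.inr (Sum.inr (Sum.inr _)), Sum.inl _ => (n : ℝ)
  | Sum.inr (Sum.inr (Sum.inr _)), Sum.inr (Sum.inl _) => (n : ℝ) - 1
  | Sum.inr (Sum.inr (Sum.inr _)), Sum.inr (Sum.inr (Sum.inl _)) => (n : ℝ)
  | Sum.inr (Sum.inr (Sum.inr _)), Sum.inr (Sum.inr (Sum.inr _)) => (n : ℝ) + 2

lemma myEU_eq [Fintype α] [Fintype β] (u : α → β → ℝ) (p : α → ℝ) (q : β → ℝ) :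
    EU u p q = ∑ a, p a * ∑ b, q b * u a b := by
  unfold EU
  refine Finset.sum_congr rfl fun a _ => ?_
  rw [Finset.mul_sum]
  refine Finset.sum_congr rfl fun b _ => ?_
  ring

lemma myEU_pure_left [Fintype α] [Fintype β] [DecidableEq α]
    (u : α → β → ℝ) (a' : α) (q : β → ℝ) :
    EU u (pureStrat a') q = ∑ b, q b * u a' b := by
  rw [myEU_eq]
  unfold pureStrat
  rw [Finset.sum_eq_single a']
  · simp
  · intro b _ hb; simp [hb]
  · simp

lemma myEU_pure_right [Fintype α] [Fintype β] [DecidableEq β]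
    (u : α → β → ℝ) (p : α → ℝ) (b' : β) :
    EU u p (pureStrat b') = ∑ a, p a * u a b' := by
  rw [myEU_eq]
  refine Finset.sum_congr rfl fun a _ => ?_
  unfold pureStrat
  congr 1
  rw [Finset.sum_eq_single b']
  · simp
  · intro b _ hb; simp [hb]
  · simp

lemma my_helper_sum (n : ℕ) (hn : 1 ≤ n) (f g : Fin n → ℝ) (i0 : Fin n)
    (hf0 : f i0 = 0) (hfn : ∀ i, f i ≤ n)
    (hg0 : g i0 = 2 * ((n : ℝ) - 1)) (hd : ∀ i, -2 ≤ g i - f i) :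
    (∑ i, f i ≤ (n : ℝ) * ((n : ℝ) - 1)) ∧ (∑ i, f i ≤ ∑ i, g i) := by
  have hcard : (Finset.univ.erase i0).card = n - 1 := by
    rw [Finset.card_erase_of_mem (Finset.mem_univ _), Finset.card_univ, Fintype.card_fin]
  have hcast : ((n - 1 : ℕ) : ℝ) = (n : ℝ) - 1 := by
    rw [Nat.cast_sub hn]; simp
  constructor
  · have h1 : ∑ i ∈ Finset.univ.erase i0, f i ≤ (Finset.univ.erase i0).card • (n : ℝ) :=
      Finset.sum_le_card_nsmul _ _ _ (fun i _ => hfn i)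
    rw [hcard, nsmul_eq_mul, hcast] at h1
    have h2 : f i0 + ∑ i ∈ Finset.univ.erase i0, f i = ∑ i, f i :=
      Finset.add_sum_erase _ f (Finset.mem_univ i0)
    nlinarith [h1, h2, hf0]
  · have h1 : (Finset.univ.erase i0).card • (-2 : ℝ) ≤
        ∑ i ∈ Finset.univ.erase i0, (g i - f i) :=
      Finset.card_nsmul_le_sum _ _ _ (fun i _ => hd i)
    rw [hcard, nsmul_eq_mul, hcast] at h1
    have h2 : (g i0 - f i0) + ∑ i ∈ Finset.univ.erase i0, (g i - f i) = ∑ i, (g i - f i) :=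
      Finset.add_sum_erase _ (fun i => g i - f i) (Finset.mem_univ i0)
    have h3 : ∑ i, (g i - f i) = ∑ i, g i - ∑ i, f i := Finset.sum_sub_distrib g f
    nlinarith [h1, h2, h3, hg0, hf0]

/-- if choosing one literal `ℓ^i = (i, σ i)` per variable satisfies `φ`
(clauses nonempty), then the uniform distribution `μ` on `{ℓ^1,…,ℓ^n}` gives a profile
`(μ,μ)` that is both a Nash equilibrium of `G(φ)` and envy-proof in `G(φ)`. -/
theorem satisfying_assignment_gives_envyProof_nash
    (n : ℕ) (hn : 1 ≤ n) (C : Finset (Finset (Lit n)))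
    (hC : ∀ c ∈ C, c.Nonempty)
    (σ : Fin n → Bool) (hsat : ∀ c ∈ C, ∃ i : Fin n, ((i, σ i) : Lit n) ∈ c)
    (μ : Act n C → ℝ)
    (hμ : μ = fun a =>
      if a ∈ Finset.univ.image (fun i : Fin n => (Sum.inr (Sum.inl (i, σ i)) : Act n C))
      then (1 : ℝ) / n else 0) :
    IsNash (gu n C) (fun x y => gu n C y x) μ μ ∧
    IsEnvyProof (gu n C) (fun x y => gu n C y x) μ μ := by
  set F : Fin n → Act n C := fun i => Sum.inr (Sum.inl (i, σ i)) with hF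
  have hFinj : Function.Injective F := by
    intro i j h
    simpa [hF] using congrArg (fun x => Sum.elim (fun _ => i)
      (Sum.elim Prod.fst (fun _ => i)) x) h
  have hnR : (0 : ℝ) < n := by exact_mod_cast hn
  have hn1 : (1 : ℝ) ≤ n := by exact_mod_cast hn
  have hμval : ∀ b, μ b = if b ∈ Finset.univ.image F then (1 : ℝ) / n else 0 := by
    intro b; rw [hμ]
  -- key reduction of μ-weighted sums
  have hMsum : ∀ g : Act n C → ℝ, ∑ b, μ b * g b = (1 / n) * ∑ i, g (F i) := by
    intro g
    simp_rw [hμval, ite_mul, zero_mul]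
    rw [Finset.sum_ite_mem, Finset.univ_inter,
      Finset.sum_image (fun i _ j _ h => hFinj h), Finset.mul_sum]
  have hguFF : ∀ i j : Fin n, gu n C (F i) (F j) = (n : ℝ) - 1 := by
    intro i j
    have hne : ((i, σ i) : Lit n) ≠ negLit (j, σ j) := by
      simp only [negLit, ne_eq, Prod.mk.injEq, not_and]
      rintro rfl; simp
    simp [hF, gu, hne]
  -- expected utilities under (μ, μ)
  have hEUpp : EU (gu n C) μ μ = (n : ℝ) - 1 := by
    rw [myEU_eq, hMsum]
    have : ∀ i : Fin n, (∑ b, μ b * gu n C (F i) b) = (n : ℝ) - 1 := by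
      intro i
      rw [hMsum]
      simp only [hguFF, Finset.sum_const, Finset.card_univ, Fintype.card_fin, nsmul_eq_mul]
      field_simp
    simp only [this, Finset.sum_const, Finset.card_univ, Fintype.card_fin, nsmul_eq_mul]
    field_simp
  have hEUpp' : EU (fun x y => gu n C y x) μ μ = (n : ℝ) - 1 := by
    rw [myEU_eq, hMsum]
    have : ∀ i : Fin n, (∑ b, μ b * gu n C b (F i)) = (n : ℝ) - 1 := by
      intro i
      rw [hMsum (fun b => gu n C b (F i))]
      simp only [hguFF, Finset.sum_const, Finset.card_univ, Fintype.card_fin, nsmul_eq_mul]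
      field_simp
    simp only [this, Finset.sum_const, Finset.card_univ, Fintype.card_fin, nsmul_eq_mul]
    field_simp
  -- the central combinatorial bounds
  have key : ∀ a' : Act n C,
      (∑ i, gu n C a' (F i) ≤ (n : ℝ) * ((n : ℝ) - 1)) ∧
      (∑ i, gu n C a' (F i) ≤ ∑ i, gu n C (F i) a') := by
    rintro (j | l | c | u)
    · -- variable
      refine my_helper_sum n hn _ _ j ?_ ?_ ?_ ?_
      · simp [hF, gu]
      · intro i; simp only [hF, gu]; split <;> linarith
      · simp [hF, gu]
      · intro i; simp only [hF, gu]; split <;> linarith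
    · -- literal
      have hiff : ∀ m : Lit n, (l = negLit m) ↔ (m = negLit l) := by
        intro m
        constructor <;> rintro rfl <;> simp [negLit]
      constructor
      · have h1 : ∑ i, gu n C (Sum.inr (Sum.inl l)) (F i) ≤
            (Finset.univ : Finset (Fin n)).card • ((n : ℝ) - 1) := by
          refine Finset.sum_le_card_nsmul _ _ _ (fun i _ => ?_)
          simp only [hF, gu]
          split <;> linarith
        simpa [nsmul_eq_mul] using h1
      · refine le_of_eq (Finset.sum_congr rfl fun i _ => ?_)
        simp only [hF, gu]
        exact if_congr (hiff _) rfl rfl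
    · -- clause
      obtain ⟨i0, hi0⟩ := hsat c.1 c.2
      refine my_helper_sum n hn _ _ i0 ?_ ?_ ?_ ?_
      · simp [hF, gu, hi0]
      · intro i; simp only [hF, gu]; split <;> linarith
      · simp [hF, gu, hi0]
      · intro i; simp only [hF, gu]; split <;> linarith
    · -- default action f
      constructor
      · refine le_of_eq ?_
        simp only [hF, gu, Finset.sum_const, Finset.card_univ, Fintype.card_fin, nsmul_eq_mul]
      · refine le_of_eq (Finset.sum_congr rfl fun i _ => ?_)
        simp [hF, gu]
  have hscale : ∀ A B : ℝ, A ≤ B → (1 / n) * A ≤ (1 / n) * B := by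
    intro A B h
    exact mul_le_mul_of_nonneg_left h (by positivity)
  have hnn : (1 / (n : ℝ)) * ((n : ℝ) * ((n : ℝ) - 1)) = (n : ℝ) - 1 := by
    field_simp
  refine ⟨⟨?_, ?_⟩, ?_, ?_⟩
  · intro a'
    rw [myEU_pure_left, hMsum (fun b => gu n C a' b), hEUpp, ← hnn]
    exact hscale _ _ (key a').1
  · intro b'
    rw [myEU_pure_right, hMsum (fun a => gu n C b' a), hEUpp', ← hnn]
    exact hscale _ _ (key b').1
  · intro a'
    rw [myEU_pure_left (gu n C), myEU_pure_left (fun x y => gu n C y x),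
      hMsum (fun b => gu n C a' b), hMsum (fun b => gu n C b a'), hEUpp, hEUpp']
    exact sub_le_sub_right (hscale _ _ (key a').2) _
  · intro b'
    rw [myEU_pure_right (gu n C), myEU_pure_right (fun x y => gu n C y x),
      hMsum (fun a => gu n C a b'), hMsum (fun a => gu n C b' a), hEUpp, hEUpp']
    exact sub_le_sub_right (hscale _ _ (key b').2) _
end

section
/- Let G = ({u0,u1}, A) be a two-player game with common finite action set A of size n ≥ 2 and utilities u0, u1 : A × A → [0,1]. Suppose G admits a mixed strategy profile x* that is a Nash equilibrium and is ε_ef-envy-proof for some ε_ef ≥ 0. Then for every ε with 0 < ε < 1 and every integer k ≥ 3 ln n / ε², there exists a k-uniform mixed strategy profile that is an ε-Nash equilibrium of G and is (2ε + ε_ef)-envy-proof in G. -/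
open Finset

variable {α β : Type*}

/-- `(p,q)` is an ε-Nash equilibrium of the two-player game `({u0,u1},{α,β})`. -/
def IsEpsNash [Fintype α] [Fintype β] [DecidableEq α] [DecidableEq β]
    (u0 u1 : α → β → ℝ) (ε : ℝ) (p : α → ℝ) (q : β → ℝ) : Prop :=
  (∀ a' : α, EU u0 (pureStrat a') q ≤ EU u0 p q + ε) ∧
  (∀ b' : β, EU u1 p (pureStrat b') ≤ EU u1 p q + ε)

/-- `(p,q)` is ε-envy-proof in the two-player game `({u0,u1},{α,β})`. -/
def IsEpsEnvyProof [Fintype α] [Fintype β] [DecidableEq α] [DecidableEq β]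
    (u0 u1 : α → β → ℝ) (ε : ℝ) (p : α → ℝ) (q : β → ℝ) : Prop :=
  (∀ a' : α, EU u0 (pureStrat a') q - EU u0 p q ≤ EU u1 (pureStrat a') q - EU u1 p q + ε) ∧
  (∀ b' : β, EU u1 p (pureStrat b') - EU u1 p q ≤ EU u0 p (pureStrat b') - EU u0 p q + ε)

/-- A mixed strategy is `k`-uniform if it is the uniform distribution over a multiset
of `k` pure actions, i.e. every probability is an integer multiple of `1/k`. -/
def KUniform [Fintype α] (k : ℕ) (p : α → ℝ) : Prop :=
  ∀ a : α, ∃ j : ℕ, p a = (j : ℝ) / k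

set_option linter.unusedSectionVars false

section EUlemmas

variable {α β : Type*} [Fintype α] [Fintype β] [DecidableEq α] [DecidableEq β]

lemma EU_pure_left (u : α → β → ℝ) (q : β → ℝ) (a : α) :
    EU u (pureStrat a) q = ∑ b, q b * u a b := by
  unfold EU pureStrat
  rw [Finset.sum_eq_single a]
  · simp
  · intro a' _ ha'; simp [ha']
  · simp

lemma EU_pure_right (u : α → β → ℝ) (p : α → ℝ) (b : β) :
    EU u p (pureStrat b) = ∑ a, p a * u a b := by
  unfold EU pureStrat
  rw [Finset.sum_congr rfl (fun a _ => Finset.sum_eq_single b (fun b' _ hb' => by simp [hb'])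
    (by simp))]
  simp

lemma EU_eq_sum_left (u : α → β → ℝ) (p : α → ℝ) (q : β → ℝ) :
    EU u p q = ∑ a, p a * EU u (pureStrat a) q := by
  have h : EU u p q = ∑ a, ∑ b, p a * q b * u a b := rfl
  rw [h]
  refine Finset.sum_congr rfl fun a _ => ?_
  rw [EU_pure_left, Finset.mul_sum]
  exact Finset.sum_congr rfl fun b _ => by ring

lemma EU_eq_sum_right (u : α → β → ℝ) (p : α → ℝ) (q : β → ℝ) :
    EU u p q = ∑ b, q b * EU u p (pureStrat b) := by
  have h : EU u p q = ∑ a, ∑ b, p a * q b * u a b := rfl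
  rw [h, Finset.sum_comm]
  refine Finset.sum_congr rfl fun b _ => ?_
  rw [EU_pure_right, Finset.mul_sum]
  exact Finset.sum_congr rfl fun a _ => by ring

lemma EU_pure_pure (u : α → β → ℝ) (a : α) (b : β) :
    EU u (pureStrat a) (pureStrat b) = u a b := by
  rw [EU_pure_left, Finset.sum_eq_single b (fun b' _ hb' => by simp [pureStrat, hb'])
    (by simp)]
  simp [pureStrat]

/-- Value of a `[0,1]`-valued utility against mixed strategies is in `[0,1]`. -/
lemma EU_mem_Icc (u : α → β → ℝ) (hu : ∀ a b, u a b ∈ Set.Icc (0:ℝ) 1)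
    {p : α → ℝ} {q : β → ℝ} (hp : IsMixed p) (hq : IsMixed q) :
    EU u p q ∈ Set.Icc (0:ℝ) 1 := by
  constructor
  · exact Finset.sum_nonneg fun a _ => Finset.sum_nonneg fun b _ =>
      mul_nonneg (mul_nonneg (hp.1 a) (hq.1 b)) (hu a b).1
  · calc EU u p q ≤ ∑ a, ∑ b, p a * q b := by
          refine Finset.sum_le_sum fun a _ => Finset.sum_le_sum fun b _ => ?_
          have := (hu a b).2
          nlinarith [mul_nonneg (hp.1 a) (hq.1 b)]
       _ = 1 := by
          rw [← hp.2]
          refine Finset.sum_congr rfl fun a _ => ?_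
          rw [← Finset.mul_sum, hq.2, mul_one]

/-- Nash equality on the support. -/
lemma nash_support_eq_left {u0 u1 : α → β → ℝ} {p q}
    (hp : IsMixed p) (hN : IsNash u0 u1 p q) {a : α} (ha : 0 < p a) :
    EU u0 (pureStrat a) q = EU u0 p q := by
  by_contra hne
  have hlt : EU u0 (pureStrat a) q < EU u0 p q := lt_of_le_of_ne (hN.1 a) hne
  have h1 : EU u0 p q < EU u0 p q := by
    calc EU u0 p q = ∑ a', p a' * EU u0 (pureStrat a') q := EU_eq_sum_left u0 p q
      _ < ∑ a', p a' * EU u0 p q := by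
          apply Finset.sum_lt_sum
          · exact fun a' _ => mul_le_mul_of_nonneg_left (hN.1 a') (hp.1 a')
          · exact ⟨a, Finset.mem_univ a, by exact mul_lt_mul_of_pos_left hlt ha⟩
      _ = EU u0 p q := by rw [← Finset.sum_mul, hp.2, one_mul]
  exact absurd h1 (lt_irrefl _)

lemma nash_support_eq_right {u0 u1 : α → β → ℝ} {p q}
    (hq : IsMixed q) (hN : IsNash u0 u1 p q) {b : β} (hb : 0 < q b) :
    EU u1 p (pureStrat b) = EU u1 p q := by
  by_contra hne
  have hlt : EU u1 p (pureStrat b) < EU u1 p q := lt_of_le_of_ne (hN.2 b) hne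
  have h1 : EU u1 p q < EU u1 p q := by
    calc EU u1 p q = ∑ b', q b' * EU u1 p (pureStrat b') := EU_eq_sum_right u1 p q
      _ < ∑ b', q b' * EU u1 p q := by
          apply Finset.sum_lt_sum
          · exact fun b' _ => mul_le_mul_of_nonneg_left (hN.2 b') (hq.1 b')
          · exact ⟨b, Finset.mem_univ b, by exact mul_lt_mul_of_pos_left hlt hb⟩
      _ = EU u1 p q := by rw [← Finset.sum_mul, hq.2, one_mul]
  exact absurd h1 (lt_irrefl _)

end EUlemmas
section Interface

variable {A : Type*} [Fintype A] [DecidableEq A]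

lemma isMixed_pure (a : A) : IsMixed (pureStrat a) := by
  constructor
  · intro a'; unfold pureStrat; positivity
  · simp [pureStrat]

lemma sum_sub_mul_le_half (x y g : A → ℝ) (hx : ∑ a, x a = 1) (hy : ∑ a, y a = 1)
    (hg0 : ∀ a, 0 ≤ g a) (hg1 : ∀ a, g a ≤ 1) :
    ∑ a, (x a - y a) * g a ≤ (∑ a, |x a - y a|) / 2 := by
  have h1 : ∀ a, (x a - y a) * g a ≤ (|x a - y a| + (x a - y a)) / 2 := by
    intro a
    rcases le_or_gt (x a - y a) 0 with h | h
    · have h2 : (x a - y a) * g a ≤ 0 := mul_nonpos_iff.mpr (Or.inr ⟨h, hg0 a⟩)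
      nlinarith [neg_abs_le (x a - y a)]
    · rw [abs_of_pos h]
      nlinarith [hg1 a, h.le]
  calc ∑ a, (x a - y a) * g a ≤ ∑ a, (|x a - y a| + (x a - y a)) / 2 :=
        Finset.sum_le_sum fun a _ => h1 a
    _ = (∑ a, |x a - y a|) / 2 := by
        rw [← Finset.sum_div, Finset.sum_add_distrib, Finset.sum_sub_distrib, hx, hy]
        ring

lemma EU_sub_right (u : A → A → ℝ) (p q q' : A → ℝ) :
    EU u p q' - EU u p q = ∑ b, (q' b - q b) * EU u p (pureStrat b) := by
  rw [EU_eq_sum_right u p q', EU_eq_sum_right u p q, ← Finset.sum_sub_distrib]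
  exact Finset.sum_congr rfl fun b _ => by ring

lemma EU_sub_left (u : A → A → ℝ) (p p' q : A → ℝ) :
    EU u p' q - EU u p q = ∑ a, (p' a - p a) * EU u (pureStrat a) q := by
  rw [EU_eq_sum_left u p' q, EU_eq_sum_left u p q, ← Finset.sum_sub_distrib]
  exact Finset.sum_congr rfl fun a _ => by ring

lemma EU_perturb_right (u : A → A → ℝ) (hu : ∀ a b, u a b ∈ Set.Icc (0:ℝ) 1)
    {p q q' : A → ℝ} (hp : IsMixed p) (hq : IsMixed q) (hq' : IsMixed q') :
    EU u p q' - EU u p q ≤ (∑ b, |q' b - q b|) / 2 := by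
  rw [EU_sub_right]
  exact sum_sub_mul_le_half q' q _ hq'.2 hq.2
    (fun b => (EU_mem_Icc u hu hp (isMixed_pure b)).1)
    (fun b => (EU_mem_Icc u hu hp (isMixed_pure b)).2)

lemma EU_perturb_left (u : A → A → ℝ) (hu : ∀ a b, u a b ∈ Set.Icc (0:ℝ) 1)
    {p p' q : A → ℝ} (hp : IsMixed p) (hp' : IsMixed p') (hq : IsMixed q) :
    EU u p' q - EU u p q ≤ (∑ a, |p' a - p a|) / 2 := by
  rw [EU_sub_left]
  exact sum_sub_mul_le_half p' p _ hp'.2 hp.2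
    (fun a => (EU_mem_Icc u hu (isMixed_pure a) hq).1)
    (fun a => (EU_mem_Icc u hu (isMixed_pure a) hq).2)

/-- If `p` is supported in the support of `p₀` and `(p₀,q₀)` is Nash, then `p` achieves
the equilibrium value against `q₀`. -/
lemma eval_support_left {u0 u1 : A → A → ℝ} {p₀ q₀ : A → ℝ}
    (hp₀ : IsMixed p₀) (hN : IsNash u0 u1 p₀ q₀)
    {p : A → ℝ} (hp : IsMixed p) (hs : ∀ a, p₀ a = 0 → p a = 0) :
    EU u0 p q₀ = EU u0 p₀ q₀ := by
  rw [EU_eq_sum_left u0 p q₀]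
  have : ∀ a ∈ Finset.univ, p a * EU u0 (pureStrat a) q₀ = p a * EU u0 p₀ q₀ := by
    intro a _
    rcases eq_or_lt_of_le (hp₀.1 a) with h | h
    · rw [hs a h.symm]; ring
    · rw [nash_support_eq_left hp₀ hN h]
  rw [Finset.sum_congr rfl this, ← Finset.sum_mul, hp.2, one_mul]

lemma eval_support_right {u0 u1 : A → A → ℝ} {p₀ q₀ : A → ℝ}
    (hq₀ : IsMixed q₀) (hN : IsNash u0 u1 p₀ q₀)
    {q : A → ℝ} (hq : IsMixed q) (hs : ∀ b, q₀ b = 0 → q b = 0) :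
    EU u1 p₀ q = EU u1 p₀ q₀ := by
  rw [EU_eq_sum_right u1 p₀ q]
  have : ∀ b ∈ Finset.univ, q b * EU u1 p₀ (pureStrat b) = q b * EU u1 p₀ q₀ := by
    intro b _
    rcases eq_or_lt_of_le (hq₀.1 b) with h | h
    · rw [hs b h.symm]; ring
    · rw [nash_support_eq_right hq₀ hN h]
  rw [Finset.sum_congr rfl this, ← Finset.sum_mul, hq.2, one_mul]

/-- The key interface: eight approximation conditions imply the conclusion. -/
lemma interface_lemma (u0 u1 : A → A → ℝ)
    (εef : ℝ) (p₀ q₀ : A → ℝ)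
    (hNash : IsNash u0 u1 p₀ q₀) (hEP : IsEpsEnvyProof u0 u1 εef p₀ q₀)
    (ε : ℝ) (p q : A → ℝ)
    (h1 : ∀ a, EU u0 (pureStrat a) q ≤ EU u0 (pureStrat a) q₀ + ε/2)
    (h2 : ∀ a, EU u1 (pureStrat a) q₀ - ε/2 ≤ EU u1 (pureStrat a) q)
    (h3 : ∀ b, EU u1 p (pureStrat b) ≤ EU u1 p₀ (pureStrat b) + ε/2)
    (h4 : ∀ b, EU u0 p₀ (pureStrat b) - ε/2 ≤ EU u0 p (pureStrat b))
    (h5 : EU u0 p₀ q₀ - ε/2 ≤ EU u0 p q)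
    (h6 : EU u1 p q ≤ EU u1 p₀ q₀ + ε/2)
    (h7 : EU u1 p₀ q₀ - ε/2 ≤ EU u1 p q)
    (h8 : EU u0 p q ≤ EU u0 p₀ q₀ + ε/2) :
    IsEpsNash u0 u1 ε p q ∧ IsEpsEnvyProof u0 u1 (2 * ε + εef) p q := by
  refine ⟨⟨fun a => ?_, fun b => ?_⟩, ⟨fun a => ?_, fun b => ?_⟩⟩
  · have := hNash.1 a; have := h1 a; linarith
  · have := hNash.2 b; have := h3 b; linarith
  · have := hEP.1 a; have := h1 a; have := h2 a; linarith
  · have := hEP.2 b; have := h3 b; have := h4 b; linarith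

end Interface
section Rounding

variable {A : Type*} [Fintype A] [DecidableEq A]

/-- Among any `R` ≤ `|P|` elements one can pick a subset of size `R` capturing at least
an `R/|P|` fraction of the total (nonnegative) weight. -/
lemma exists_top_subset (f : A → ℝ) :
    ∀ (R : ℕ) (P : Finset A), (∀ a ∈ P, 0 ≤ f a) → R ≤ P.card →
      ∃ S ⊆ P, S.card = R ∧ (R : ℝ) * ∑ a ∈ P, f a ≤ (P.card : ℝ) * ∑ a ∈ S, f a := by
  intro R
  induction R with
  | zero =>
    intro P hf _
    exact ⟨∅, Finset.empty_subset P, Finset.card_empty, by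
      simp only [Finset.sum_empty, Nat.cast_zero, zero_mul, mul_zero, le_refl]⟩
  | succ R ih =>
    intro P hf hR
    have hPne : P.Nonempty := Finset.card_pos.mp (lt_of_lt_of_le (Nat.succ_pos R) hR)
    obtain ⟨a, haP, hamax⟩ := Finset.exists_max_image P f hPne
    set P' := P.erase a with hP'
    have hcard' : P'.card = P.card - 1 := Finset.card_erase_of_mem haP
    have hR' : R ≤ P'.card := by omega
    obtain ⟨S', hS'P', hcardS', hsumS'⟩ := ih P' (fun x hx => hf x (Finset.mem_of_mem_erase hx)) hR'
    have haS' : a ∉ S' := fun h => (Finset.notMem_erase a P) (hS'P' h)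
    refine ⟨insert a S', ?_, ?_, ?_⟩
    · exact Finset.insert_subset haP (hS'P'.trans (Finset.erase_subset a P))
    · rw [Finset.card_insert_of_notMem haS', hcardS']
    · have hsplitP : ∑ x ∈ P, f x = f a + ∑ x ∈ P', f x := by
        rw [hP', ← Finset.add_sum_erase P f haP]
      have hsplitS : ∑ x ∈ insert a S', f x = f a + ∑ x ∈ S', f x :=
        Finset.sum_insert haS'
      -- bound for the complement : sum over P' \ S' is at most (card) * f a
      have hss : S' ⊆ P' := hS'P'
      have hcompl : ∑ x ∈ P', f x - ∑ x ∈ S', f x ≤ ((P'.card - S'.card : ℕ) : ℝ) * f a := by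
        have h1 : ∑ x ∈ P' \ S', f x = ∑ x ∈ P', f x - ∑ x ∈ S', f x := by
          rw [eq_sub_iff_add_eq, Finset.sum_sdiff hss]
        have h2 : ∑ x ∈ P' \ S', f x ≤ (P' \ S').card • f a := by
          apply Finset.sum_le_card_nsmul
          intro x hx
          exact hamax x (Finset.mem_of_mem_erase (Finset.mem_sdiff.mp hx).1)
        rw [Finset.card_sdiff_of_subset hss] at h2
        rw [← h1]
        simpa [nsmul_eq_mul] using h2
      have hmm : P.card = P'.card + 1 := by omega
      have hRm : R ≤ P'.card := hR'
      -- final arithmetic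
      rw [hsplitP, hsplitS, hmm]
      rw [hcardS', Nat.cast_sub hRm] at hcompl
      push_cast
      linarith [hsumS', hcompl]

set_option linter.unusedSectionVars false in
/-- Deterministic rounding of a mixed strategy to a `k`-uniform one, within its support,
with `L1` distance at most `n/(2k)`. -/
lemma round_lemma (ρ : A → ℝ) (hρ : IsMixed ρ) (k : ℕ) (hk : 0 < k) :
    ∃ ρ' : A → ℝ, IsMixed ρ' ∧ KUniform k ρ' ∧ (∀ a, ρ a = 0 → ρ' a = 0) ∧
      ∑ a, |ρ' a - ρ a| ≤ (Fintype.card A : ℝ) / (2 * k) := by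
  have hk0 : (0:ℝ) < (k:ℝ) := by exact_mod_cast hk
  have hkne : (k:ℝ) ≠ 0 := ne_of_gt hk0
  set m : A → ℕ := fun a => ⌊(k:ℝ) * ρ a⌋₊ with hm
  set r : A → ℝ := fun a => ρ a - (m a : ℝ) / k with hrdef
  have hr0 : ∀ a, 0 ≤ r a := by
    intro a
    have := Nat.floor_le (mul_nonneg hk0.le (hρ.1 a))
    rw [hrdef]
    simp only [sub_nonneg, div_le_iff₀ hk0]
    linarith
  have hr1 : ∀ a, r a < 1 / k := by
    intro a
    have h := Nat.lt_floor_add_one ((k:ℝ) * ρ a)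
    have hma : (m a : ℝ) = (⌊(k:ℝ) * ρ a⌋₊ : ℝ) := by simp only [hm]
    have key : ρ a < (1:ℝ)/k + (m a:ℝ)/k := by
      rw [← add_div, lt_div_iff₀ hk0, hma, mul_comm]
      linarith
    rw [hrdef]
    simp only
    rw [sub_lt_iff_lt_add]
    exact key
  set M : ℕ := ∑ a, m a with hM
  have hcastM : ∑ a, (m a : ℝ) = (M:ℝ) := by rw [hM]; push_cast; rfl
  have hMk : M ≤ k := by
    have h1 : (M:ℝ) ≤ (k:ℝ) := by
      have h2 : ∀ a, (m a : ℝ) ≤ (k:ℝ) * ρ a := fun a =>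
        Nat.floor_le (mul_nonneg hk0.le (hρ.1 a))
      calc (M:ℝ) = ∑ a, (m a : ℝ) := hcastM.symm
        _ ≤ ∑ a, (k:ℝ) * ρ a := Finset.sum_le_sum fun a _ => h2 a
        _ = (k:ℝ) := by rw [← Finset.mul_sum, hρ.2, mul_one]
    exact_mod_cast h1
  set R : ℕ := k - M with hR
  have hRcast : (R:ℝ) = (k:ℝ) - (M:ℝ) := by rw [hR]; exact Nat.cast_sub hMk
  have hsumr : ∑ a, r a = (R:ℝ) / k := by
    rw [hrdef]
    simp only
    rw [Finset.sum_sub_distrib, hρ.2, ← Finset.sum_div, hcastM, hRcast]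
    field_simp
  set P : Finset A := Finset.univ.filter (fun a => 0 < r a) with hP
  have hrP : ∑ a ∈ P, r a = (R:ℝ)/k := by
    rw [hP, Finset.sum_filter_of_ne, hsumr]
    intro a _ h
    exact lt_of_le_of_ne (hr0 a) (Ne.symm h)
  have hRP : R ≤ P.card := by
    rcases Nat.eq_zero_or_pos R with h | h
    · omega
    · have hRr : (0:ℝ) < (R:ℝ) := by exact_mod_cast h
      have hPne : P.Nonempty := by
        rw [Finset.nonempty_iff_ne_empty]
        intro hemp
        rw [hemp, Finset.sum_empty] at hrP
        have : (R:ℝ) = 0 := by field_simp at hrP; linarith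
        linarith
      have hlt : (R:ℝ) < (P.card : ℝ) := by
        have h2 : ∑ a ∈ P, r a < ∑ a ∈ P, (1:ℝ)/k :=
          Finset.sum_lt_sum_of_nonempty hPne fun a _ => hr1 a
        rw [hrP, Finset.sum_const, nsmul_eq_mul] at h2
        have h3 : (R:ℝ)/k < (P.card:ℝ)/k := by
          calc (R:ℝ)/k < (P.card:ℝ) * (1/k) := h2
            _ = (P.card:ℝ)/k := by ring
        exact (div_lt_div_iff_of_pos_right hk0).mp h3
      exact_mod_cast hlt.le
  obtain ⟨S, hSP, hScard, hStop⟩ := exists_top_subset r R P (fun a _ => hr0 a) hRP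
  set ρ' : A → ℝ := fun a => ((m a + if a ∈ S then 1 else 0 : ℕ) : ℝ)/k with hρ'
  have hcastρ' : ∀ a, ρ' a = ((m a : ℝ) + if a ∈ S then (1:ℝ) else 0)/k := by
    intro a; rw [hρ']; push_cast; by_cases h : a ∈ S <;> simp [h]
  have hsumS1 : ∑ a, (if a ∈ S then (1:ℝ) else 0) = (R:ℝ) := by
    rw [Finset.sum_ite_mem, Finset.univ_inter, Finset.sum_const, hScard, nsmul_eq_mul, mul_one]
  have hmix : IsMixed ρ' := by
    constructor
    · intro a; rw [hρ']; positivity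
    · calc ∑ a, ρ' a = ∑ a, ((m a : ℝ) + if a ∈ S then (1:ℝ) else 0)/k := by
            exact Finset.sum_congr rfl fun a _ => hcastρ' a
        _ = (∑ a, ((m a:ℝ) + if a ∈ S then (1:ℝ) else 0))/k := by rw [Finset.sum_div]
        _ = ((M:ℝ) + (R:ℝ))/k := by rw [Finset.sum_add_distrib, hcastM, hsumS1]
        _ = 1 := by rw [hRcast]; field_simp; ring
  have hsupp : ∀ a, ρ a = 0 → ρ' a = 0 := by
    intro a ha
    have hma : m a = 0 := by rw [hm]; simp [ha]
    have hra : r a = 0 := by rw [hrdef]; simp [hma, ha]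
    have haP : a ∉ P := by rw [hP]; simp [hra]
    have haS : a ∉ S := fun h => haP (hSP h)
    rw [hcastρ', hma]
    simp [haS]
  have habs : ∀ a, |ρ' a - ρ a| = if a ∈ S then 1/(k:ℝ) - r a else r a := by
    intro a
    have hval : ρ' a - ρ a = (if a ∈ S then (1:ℝ) else 0)/k - r a := by
      rw [hcastρ', hrdef]
      simp only
      ring
    by_cases h : a ∈ S
    · rw [hval]; simp only [h, if_true]
      exact abs_of_nonneg (by linarith [hr1 a])
    · rw [hval]; simp only [h, if_false]
      rw [zero_div, zero_sub, abs_neg]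
      exact abs_of_nonneg (hr0 a)
  have hsplit : ∑ a, |ρ' a - ρ a| = 2*(R:ℝ)/k - 2*∑ a ∈ S, r a := by
    calc ∑ a, |ρ' a - ρ a| = ∑ a, (r a + if a ∈ S then 1/(k:ℝ) - 2 * r a else 0) := by
          refine Finset.sum_congr rfl fun a _ => ?_
          rw [habs a]
          by_cases h : a ∈ S <;> simp [h] <;> ring
      _ = (R:ℝ)/k + ∑ a ∈ S, (1/(k:ℝ) - 2*r a) := by
          rw [Finset.sum_add_distrib, hsumr, Finset.sum_ite_mem, Finset.univ_inter]
      _ = 2*(R:ℝ)/k - 2*∑ a ∈ S, r a := by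
          rw [Finset.sum_sub_distrib, Finset.sum_const, hScard, nsmul_eq_mul, Finset.mul_sum]
          rw [← Finset.mul_sum]
          ring
  refine ⟨ρ', hmix, fun a => ⟨m a + if a ∈ S then 1 else 0, by rw [hρ']⟩, hsupp, ?_⟩
  rw [hsplit]
  set s : ℝ := ∑ a ∈ S, r a with hs
  have hs0 : 0 ≤ s := Finset.sum_nonneg fun a ha => hr0 a
  set c : ℕ := P.card with hc
  have hcn : (c:ℝ) ≤ (Fintype.card A : ℝ) := by
    exact_mod_cast Finset.card_le_univ P
  rcases Nat.eq_zero_or_pos R with hRz | hRpos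
  · have hSz : S = ∅ := Finset.card_eq_zero.mp (by rw [hScard, hRz])
    have hsz : s = 0 := by rw [hs, hSz]; simp
    rw [hRz, hsz]
    norm_num
    positivity
  · have hcR : (R:ℝ) ≤ (c:ℝ) := by exact_mod_cast hRP
    have hc0 : (0:ℝ) < (c:ℝ) := by
      have : (0:ℝ) < (R:ℝ) := by exact_mod_cast hRpos
      linarith
    have hkey : (R:ℝ)^2 ≤ (c:ℝ) * s * (k:ℝ) := by
      have h1 : (R:ℝ) * ((R:ℝ)/k) ≤ (c:ℝ) * s := by rw [← hrP]; exact hStop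
      have h2 := mul_le_mul_of_nonneg_right h1 hk0.le
      calc (R:ℝ)^2 = (R:ℝ) * ((R:ℝ)/k) * k := by field_simp
        _ ≤ (c:ℝ) * s * k := h2
    have hmain : 2*(R:ℝ)/k - 2*s ≤ (c:ℝ)/(2*k) := by
      rw [le_div_iff₀ (by positivity : (0:ℝ) < 2*(k:ℝ))]
      have hexp : (2*(R:ℝ)/k - 2*s) * (2*(k:ℝ)) = 4*(R:ℝ) - 4*(s*(k:ℝ)) := by
        field_simp
        ring
      rw [hexp]
      nlinarith [hkey, sq_nonneg ((c:ℝ) - 2*(R:ℝ)), hc0, hs0, hk0]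
    calc 2*(R:ℝ)/k - 2*s ≤ (c:ℝ)/(2*k) := hmain
      _ ≤ (Fintype.card A : ℝ)/(2*k) := by gcongr

end Rounding
section Hoeffding

open Real

/-- Hoeffding's lemma, two-point form: `1 - μ + μ e^λ ≤ e^{λμ + λ²/8}` for `μ ∈ [0,1]`,
`λ ≥ 0`. -/
lemma hoeffding_aux {μ lam : ℝ} (h0 : 0 ≤ μ) (h1 : μ ≤ 1) (hl : 0 ≤ lam) :
    1 - μ + μ * Real.exp lam ≤ Real.exp (lam * μ + lam ^ 2 / 8) := by
  set D : ℝ → ℝ := fun x => 1 - μ + μ * Real.exp x with hD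
  have hDpos : ∀ x, 0 < D x := by
    intro x
    rcases eq_or_lt_of_le h0 with h | h
    · simp only [hD, ← h]; norm_num
    · have : 0 < μ * Real.exp x := mul_pos h (Real.exp_pos x)
      simp only [hD]; nlinarith
  have hDderiv : ∀ x, HasDerivAt D (μ * Real.exp x) x := by
    intro x
    exact ((Real.hasDerivAt_exp x).const_mul μ).const_add (1 - μ)
  set g : ℝ → ℝ := fun x => x * μ + x ^ 2 / 8 - Real.log (D x) with hg
  set h : ℝ → ℝ := fun x => μ + x / 4 - μ * Real.exp x / D x with hh
  have hgderiv : ∀ x, HasDerivAt g (h x) x := by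
    intro x
    have d1 : HasDerivAt (fun x : ℝ => x * μ) μ x := by
      simpa using (hasDerivAt_id x).mul_const μ
    have d2 : HasDerivAt (fun x : ℝ => x ^ 2 / 8) (x / 4) x := by
      have := (hasDerivAt_pow 2 x).div_const 8
      exact this.congr_deriv (by rw [show (2:ℕ) - 1 = 1 from rfl, pow_one]; ring)
    have d3 : HasDerivAt (fun x => Real.log (D x)) (μ * Real.exp x / D x) x := by
      have := (hDderiv x).log (ne_of_gt (hDpos x))
      simpa using this
    exact (d1.add d2).sub d3
  have hhderiv : ∀ x, HasDerivAt h
      (1/4 - (μ * Real.exp x * D x - μ * Real.exp x * (μ * Real.exp x)) / (D x) ^ 2) x := by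
    intro x
    have dq : HasDerivAt (fun x => μ * Real.exp x / D x)
        ((μ * Real.exp x * D x - μ * Real.exp x * (μ * Real.exp x)) / (D x) ^ 2) x := by
      exact ((Real.hasDerivAt_exp x).const_mul μ).div (hDderiv x) (ne_of_gt (hDpos x))
    have d4 : HasDerivAt (fun x : ℝ => μ + x / 4) (1/4) x := by
      simpa using ((hasDerivAt_id x).div_const 4).const_add μ
    exact d4.sub dq
  have hhderiv_nonneg : ∀ x, 0 ≤ 1/4 - (μ * Real.exp x * D x
      - μ * Real.exp x * (μ * Real.exp x)) / (D x) ^ 2 := by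
    intro x
    set u := μ * Real.exp x
    have hd : 0 < D x := hDpos x
    rw [sub_nonneg, div_le_iff₀ (by positivity)]
    nlinarith [sq_nonneg (D x / 2 - u)]
  have hhmono : Monotone h := by
    apply monotone_of_deriv_nonneg
    · exact fun x => (hhderiv x).differentiableAt
    · intro x
      rw [(hhderiv x).deriv]
      exact hhderiv_nonneg x
  have hh0 : h 0 = 0 := by
    have : D 0 = 1 := by simp [hD]
    simp [hh, this]
  have hhnonneg : ∀ x, 0 ≤ x → 0 ≤ h x := by
    intro x hx
    rw [← hh0]
    exact hhmono hx
  have hgmono : MonotoneOn g (Set.Ici 0) := by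
    apply monotoneOn_of_deriv_nonneg (convex_Ici 0)
    · exact Continuous.continuousOn
        (Differentiable.continuous (fun x => (hgderiv x).differentiableAt))
    · intro x hx
      exact (hgderiv x).differentiableAt.differentiableWithinAt
    · intro x hx
      rw [interior_Ici, Set.mem_Ioi] at hx
      rw [(hgderiv x).deriv]
      exact hhnonneg x hx.le
  have hg0 : g 0 = 0 := by
    have hd0 : D 0 = 1 := by simp [hD]
    simp [hg, hd0]
  have hglam : 0 ≤ g lam := by
    rw [← hg0]
    exact hgmono (Set.mem_Ici.mpr le_rfl) (Set.mem_Ici.mpr hl) hl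
  have hlog : Real.log (D lam) ≤ lam * μ + lam ^ 2 / 8 := by
    simp only [hg] at hglam
    linarith
  have := (Real.log_le_iff_le_exp (hDpos lam)).mp hlog
  simpa [hD] using this

end Hoeffding
section Chernoff

set_option linter.unusedSectionVars false

variable {A : Type*} [Fintype A] [DecidableEq A]

lemma mgf_bound (ρ : A → ℝ) (hρ : IsMixed ρ) (f : A → ℝ)
    (hf : ∀ a, f a ∈ Set.Icc (0:ℝ) 1) {lam : ℝ} (hl : 0 ≤ lam) :
    ∑ a, ρ a * Real.exp (lam * f a) ≤ Real.exp (lam * (∑ a, ρ a * f a) + lam^2/8) := by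
  set μ := ∑ a, ρ a * f a with hμ
  have hμ0 : 0 ≤ μ := Finset.sum_nonneg fun a _ => mul_nonneg (hρ.1 a) (hf a).1
  have hμ1 : μ ≤ 1 := by
    calc μ ≤ ∑ a, ρ a := Finset.sum_le_sum fun a _ => by
          nlinarith [(hf a).2, hρ.1 a, (hf a).1]
      _ = 1 := hρ.2
  have hpt : ∀ a, Real.exp (lam * f a) ≤ 1 - f a + f a * Real.exp lam := by
    intro a
    have h := convexOn_exp.2 (Set.mem_univ (0:ℝ)) (Set.mem_univ lam)
      (by linarith [(hf a).2] : (0:ℝ) ≤ 1 - f a) (hf a).1 (by ring)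
    simpa [smul_eq_mul, mul_comm] using h
  calc ∑ a, ρ a * Real.exp (lam * f a)
      ≤ ∑ a, ρ a * (1 - f a + f a * Real.exp lam) :=
        Finset.sum_le_sum fun a _ => mul_le_mul_of_nonneg_left (hpt a) (hρ.1 a)
    _ = 1 - μ + μ * Real.exp lam := by
        rw [hμ]
        rw [Finset.sum_congr rfl (fun a (_ : a ∈ Finset.univ) =>
          (by ring : ρ a * (1 - f a + f a * Real.exp lam)
            = ρ a - ρ a * f a + (ρ a * f a) * Real.exp lam))]
        rw [Finset.sum_add_distrib, Finset.sum_sub_distrib, hρ.2, ← Finset.sum_mul]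
    _ ≤ Real.exp (lam * μ + lam^2/8) := hoeffding_aux hμ0 hμ1 hl

lemma sum_prod_weights (ρ : A → ℝ) (hρ : IsMixed ρ) (k : ℕ) :
    ∑ ω : Fin k → A, ∏ i, ρ (ω i) = 1 := by
  rw [← Fintype.sum_pow, hρ.2, one_pow]

/-- Chernoff–Hoeffding upper-tail bound for the empirical mean of `k` i.i.d. samples. -/
lemma chernoff_ub (ρ : A → ℝ) (hρ : IsMixed ρ) (f : A → ℝ)
    (hf : ∀ a, f a ∈ Set.Icc (0:ℝ) 1) {t : ℝ} (ht : 0 ≤ t) (k : ℕ) :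
    ∑ ω ∈ Finset.univ.filter
        (fun ω : Fin k → A => (k:ℝ)*((∑ a, ρ a * f a) + t) < ∑ i, f (ω i)),
      (∏ i, ρ (ω i)) ≤ Real.exp (-(2*(k:ℝ)*t^2)) := by
  set μ := ∑ a, ρ a * f a with hμ
  set lam := 4*t with hlam
  have hl : 0 ≤ lam := by positivity
  have hWnn : ∀ ω : Fin k → A, 0 ≤ ∏ i, ρ (ω i) :=
    fun ω => Finset.prod_nonneg fun i _ => hρ.1 (ω i)
  have hWnn : ∀ ω : Fin k → A, 0 ≤ ∏ i, ρ (ω i) :=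
    fun ω => Finset.prod_nonneg fun i _ => hρ.1 (ω i)
  have step1 : ∑ ω ∈ Finset.univ.filter
        (fun ω : Fin k → A => (k:ℝ)*(μ + t) < ∑ i, f (ω i)), (∏ i, ρ (ω i))
      ≤ ∑ ω : Fin k → A, (∏ i, ρ (ω i)) *
          Real.exp (lam * ((∑ i, f (ω i)) - (k:ℝ)*(μ+t))) := by
    calc ∑ ω ∈ Finset.univ.filter
          (fun ω : Fin k → A => (k:ℝ)*(μ + t) < ∑ i, f (ω i)), (∏ i, ρ (ω i))
        ≤ ∑ ω ∈ Finset.univ.filter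
          (fun ω : Fin k → A => (k:ℝ)*(μ + t) < ∑ i, f (ω i)), (∏ i, ρ (ω i)) *
            Real.exp (lam * ((∑ i, f (ω i)) - (k:ℝ)*(μ+t))) := by
          apply Finset.sum_le_sum
          intro ω hω
          rw [Finset.mem_filter] at hω
          have hexp1 : (1:ℝ) ≤ Real.exp (lam * ((∑ i, f (ω i)) - (k:ℝ)*(μ+t))) :=
            Real.one_le_exp (by nlinarith [hω.2])
          nlinarith [hWnn ω]
      _ ≤ _ := by
          apply Finset.sum_le_sum_of_subset_of_nonneg (Finset.filter_subset _ _)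
          intro ω _ _
          exact mul_nonneg (hWnn ω) (Real.exp_pos _).le
  have step2 : ∀ ω : Fin k → A, (∏ i, ρ (ω i)) *
        Real.exp (lam * ((∑ i, f (ω i)) - (k:ℝ)*(μ+t)))
      = Real.exp (-(lam * ((k:ℝ)*(μ+t)))) * ∏ i, (ρ (ω i) * Real.exp (lam * f (ω i))) := by
    intro ω
    rw [Finset.prod_mul_distrib, ← Real.exp_sum]
    rw [show lam * ((∑ i, f (ω i)) - (k:ℝ)*(μ+t))
        = (∑ i, lam * f (ω i)) + (-(lam * ((k:ℝ)*(μ+t)))) by rw [← Finset.mul_sum]; ring]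
    rw [Real.exp_add]
    ring
  have step3 : ∑ ω : Fin k → A, (∏ i, ρ (ω i)) *
        Real.exp (lam * ((∑ i, f (ω i)) - (k:ℝ)*(μ+t)))
      = Real.exp (-(lam * ((k:ℝ)*(μ+t)))) * (∑ a, ρ a * Real.exp (lam * f a))^k := by
    rw [Finset.sum_congr rfl (fun ω _ => step2 ω), ← Finset.mul_sum,
      ← Fintype.sum_pow (fun a => ρ a * Real.exp (lam * f a)) k]
  have hbase0 : 0 ≤ ∑ a, ρ a * Real.exp (lam * f a) :=
    Finset.sum_nonneg fun a _ => mul_nonneg (hρ.1 a) (Real.exp_pos _).le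
  have hfinal : Real.exp (-(lam * ((k:ℝ)*(μ+t)))) * (∑ a, ρ a * Real.exp (lam * f a))^k
      ≤ Real.exp (-(2*(k:ℝ)*t^2)) := by
    calc Real.exp (-(lam * ((k:ℝ)*(μ+t)))) * (∑ a, ρ a * Real.exp (lam * f a))^k
        ≤ Real.exp (-(lam * ((k:ℝ)*(μ+t)))) * (Real.exp (lam * μ + lam^2/8))^k := by
          apply mul_le_mul_of_nonneg_left _ (Real.exp_pos _).le
          exact pow_le_pow_left₀ hbase0 (mgf_bound ρ hρ f hf hl) k
      _ = Real.exp (-(2*(k:ℝ)*t^2)) := by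
          rw [← Real.exp_nat_mul, ← Real.exp_add]
          congr 1
          rw [hlam]
          ring
  calc ∑ ω ∈ Finset.univ.filter
        (fun ω : Fin k → A => (k:ℝ)*((∑ a, ρ a * f a) + t) < ∑ i, f (ω i)),
      (∏ i, ρ (ω i)) ≤ _ := step1
    _ = _ := step3
    _ ≤ _ := hfinal

/-- Chernoff–Hoeffding lower-tail bound. -/
lemma chernoff_lb (ρ : A → ℝ) (hρ : IsMixed ρ) (f : A → ℝ)
    (hf : ∀ a, f a ∈ Set.Icc (0:ℝ) 1) {t : ℝ} (ht : 0 ≤ t) (k : ℕ) :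
    ∑ ω ∈ Finset.univ.filter
        (fun ω : Fin k → A => ∑ i, f (ω i) < (k:ℝ)*((∑ a, ρ a * f a) - t)),
      (∏ i, ρ (ω i)) ≤ Real.exp (-(2*(k:ℝ)*t^2)) := by
  have h := chernoff_ub ρ hρ (fun a => 1 - f a)
    (fun a => ⟨by linarith [(hf a).2], by linarith [(hf a).1]⟩) ht k
  have hμ' : ∑ a, ρ a * (1 - f a) = 1 - ∑ a, ρ a * f a := by
    rw [Finset.sum_congr rfl (fun a (_ : a ∈ Finset.univ) =>
      (by ring : ρ a * (1 - f a) = ρ a - ρ a * f a)), Finset.sum_sub_distrib, hρ.2]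
  have hset : ∀ ω : Fin k → A,
      ((k:ℝ)*((∑ a, ρ a * (1 - f a)) + t) < ∑ i, (1 - f (ω i)))
      ↔ (∑ i, f (ω i) < (k:ℝ)*((∑ a, ρ a * f a) - t)) := by
    intro ω
    rw [hμ', Finset.sum_sub_distrib, Finset.sum_const, Finset.card_univ, Fintype.card_fin,
      nsmul_eq_mul, mul_one]
    constructor <;> intro h' <;> nlinarith
  calc ∑ ω ∈ Finset.univ.filter
        (fun ω : Fin k → A => ∑ i, f (ω i) < (k:ℝ)*((∑ a, ρ a * f a) - t)),
      (∏ i, ρ (ω i))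
      = ∑ ω ∈ Finset.univ.filter
        (fun ω : Fin k → A => (k:ℝ)*((∑ a, ρ a * (1 - f a)) + t) < ∑ i, (1 - f (ω i))),
      (∏ i, ρ (ω i)) := by
        apply Finset.sum_congr _ (fun _ _ => rfl)
        apply Finset.filter_congr
        intro ω _
        rw [hset ω]
    _ ≤ Real.exp (-(2*(k:ℝ)*t^2)) := h

end Chernoff
section Sampling

set_option linter.unusedSectionVars false

variable {A : Type*} [Fintype A] [DecidableEq A]

/-- Empirical distribution of a sample `ω`. -/
noncomputable def emp {k : ℕ} (ω : Fin k → A) : A → ℝ :=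
  fun a => (∑ i, if ω i = a then (1:ℝ) else 0) / k

lemma emp_nonneg {k : ℕ} (ω : Fin k → A) (a : A) : 0 ≤ emp ω a := by
  unfold emp; positivity

lemma emp_isMixed {k : ℕ} (hk : 0 < k) (ω : Fin k → A) : IsMixed (emp ω) := by
  refine ⟨emp_nonneg ω, ?_⟩
  unfold emp
  rw [← Finset.sum_div, Finset.sum_comm]
  have : ∀ i ∈ (Finset.univ : Finset (Fin k)), ∑ a, (if ω i = a then (1:ℝ) else 0) = 1 := by
    intro i _
    rw [Finset.sum_ite_eq]
    simp
  rw [Finset.sum_congr rfl this, Finset.sum_const, Finset.card_univ, Fintype.card_fin,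
    nsmul_eq_mul, mul_one]
  field_simp

lemma emp_kUniform {k : ℕ} (ω : Fin k → A) : KUniform k (emp ω) := by
  intro a
  refine ⟨(Finset.univ.filter (fun i => ω i = a)).card, ?_⟩
  unfold emp
  congr 1
  rw [Finset.sum_boole]

lemma emp_support {k : ℕ} {ρ : A → ℝ} {ω : Fin k → A} (hω : ∀ i, ρ (ω i) ≠ 0) :
    ∀ a, ρ a = 0 → emp ω a = 0 := by
  intro a ha
  unfold emp
  have : ∀ i ∈ (Finset.univ : Finset (Fin k)), (if ω i = a then (1:ℝ) else 0) = 0 := by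
    intro i _
    have : ω i ≠ a := fun h => hω i (h ▸ ha)
    simp [this]
  rw [Finset.sum_congr rfl this]
  simp

/-- Averaging a function against an empirical distribution. -/
lemma emp_avg {k : ℕ} (hk : 0 < k) (ω : Fin k → A) (g : A → ℝ) :
    ∑ a, emp ω a * g a = (∑ i, g (ω i)) / k := by
  unfold emp
  have key : ∑ a, (∑ i, if ω i = a then (1:ℝ) else 0) * g a = ∑ i, g (ω i) := by
    have h1 : ∀ a ∈ (Finset.univ : Finset A), (∑ i, if ω i = a then (1:ℝ) else 0) * g a
        = ∑ i, (if ω i = a then g a else 0) := by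
      intro a _
      rw [Finset.sum_mul]
      exact Finset.sum_congr rfl fun i _ => by split <;> simp
    rw [Finset.sum_congr rfl h1, Finset.sum_comm]
    refine Finset.sum_congr rfl fun i _ => ?_
    rw [Finset.sum_ite_eq]
    simp
  calc ∑ a, (∑ i, if ω i = a then (1:ℝ) else 0)/(k:ℝ) * g a
      = (∑ a, (∑ i, if ω i = a then (1:ℝ) else 0) * g a)/k := by
        rw [Finset.sum_div]
        exact Finset.sum_congr rfl fun a _ => by ring
    _ = _ := by rw [key]

lemma EU_pure_emp {k : ℕ} (hk : 0 < k) (u : A → A → ℝ) (a : A) (ω : Fin k → A) :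
    EU u (pureStrat a) (emp ω) = (∑ j, u a (ω j)) / k := by
  rw [EU_pure_left]
  exact emp_avg hk ω (fun b => u a b)

lemma EU_emp_pure {k : ℕ} (hk : 0 < k) (u : A → A → ℝ) (b : A) (ω : Fin k → A) :
    EU u (emp ω) (pureStrat b) = (∑ i, u (ω i) b) / k := by
  rw [EU_pure_right]
  exact emp_avg hk ω (fun a => u a b)

/-- Union bound for weights. -/
lemma union_bound {ι γ : Type*} [Fintype ι] [Fintype γ] (W : ι → ℝ) (hW : ∀ x, 0 ≤ W x)
    (P : γ → ι → Prop) [∀ c, DecidablePred (P c)] (β : ℝ)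
    (hP : ∀ c, ∑ x ∈ Finset.univ.filter (P c), W x ≤ β) :
    ∑ x ∈ Finset.univ.filter (fun x => ∃ c, P c x), W x ≤ (Fintype.card γ : ℝ) * β := by
  classical
  calc ∑ x ∈ Finset.univ.filter (fun x => ∃ c, P c x), W x
      ≤ ∑ x ∈ Finset.univ.filter (fun x => ∃ c, P c x), (∑ c, if P c x then W x else 0) := by
        apply Finset.sum_le_sum
        intro x hx
        rw [Finset.mem_filter] at hx
        obtain ⟨c, hc⟩ := hx.2
        calc W x = if P c x then W x else 0 := (if_pos hc).symm
          _ ≤ ∑ c', if P c' x then W x else 0 :=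
            Finset.single_le_sum (f := fun c' => if P c' x then W x else 0)
              (fun c' _ => by split <;> [exact hW x; exact le_rfl]) (Finset.mem_univ c)
    _ ≤ ∑ x, (∑ c, if P c x then W x else 0) := by
        apply Finset.sum_le_sum_of_subset_of_nonneg (Finset.filter_subset _ _)
        intro x _ _
        exact Finset.sum_nonneg fun c _ => by split <;> [exact hW x; exact le_rfl]
    _ = ∑ c, ∑ x ∈ Finset.univ.filter (P c), W x := by
        rw [Finset.sum_comm]
        exact Finset.sum_congr rfl fun c _ => (Finset.sum_filter _ _).symm
    _ ≤ ∑ c : γ, β := Finset.sum_le_sum fun c _ => hP c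
    _ = (Fintype.card γ : ℝ) * β := by
        rw [Finset.sum_const, Finset.card_univ, nsmul_eq_mul]

/-- From a strict union bound, extract a good sample of positive weight. -/
lemma exists_good {ι : Type*} [Fintype ι] (W : ι → ℝ) (hW : ∀ x, 0 ≤ W x)
    (hsum : ∑ x, W x = 1) (Bad : ι → Prop) [DecidablePred Bad]
    (hbad : ∑ x ∈ Finset.univ.filter Bad, W x < 1) :
    ∃ x, ¬ Bad x ∧ 0 < W x := by
  have hsplit : ∑ x ∈ Finset.univ.filter Bad, W x
      + ∑ x ∈ Finset.univ.filter (fun x => ¬ Bad x), W x = 1 := by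
    rw [Finset.sum_filter_add_sum_filter_not, hsum]
  have hpos : 0 < ∑ x ∈ Finset.univ.filter (fun x => ¬ Bad x), W x := by linarith
  obtain ⟨x, hx, hxne⟩ := Finset.exists_ne_zero_of_sum_ne_zero (ne_of_gt hpos)
  rw [Finset.mem_filter] at hx
  exact ⟨x, hx.2, lt_of_le_of_ne (hW x) (Ne.symm hxne)⟩

end Sampling
section SamplingMain

set_option linter.unusedSectionVars false
set_option maxHeartbeats 1000000

variable {A : Type*} [Fintype A] [DecidableEq A]

lemma chernoff_ub' (ρ : A → ℝ) (hρ : IsMixed ρ) (f : A → ℝ)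
    (hf : ∀ a, f a ∈ Set.Icc (0:ℝ) 1) {t : ℝ} (ht : 0 ≤ t) (k : ℕ)
    (E : Finset (Fin k → A))
    (hE : ∀ ω ∈ E, (k:ℝ)*((∑ a, ρ a * f a) + t) < ∑ i, f (ω i)) :
    ∑ ω ∈ E, (∏ i, ρ (ω i)) ≤ Real.exp (-(2*(k:ℝ)*t^2)) := by
  classical
  calc ∑ ω ∈ E, (∏ i, ρ (ω i))
      ≤ ∑ ω ∈ Finset.univ.filter
          (fun ω : Fin k → A => (k:ℝ)*((∑ a, ρ a * f a) + t) < ∑ i, f (ω i)),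
        (∏ i, ρ (ω i)) := by
        apply Finset.sum_le_sum_of_subset_of_nonneg
        · intro ω hω
          exact Finset.mem_filter.mpr ⟨Finset.mem_univ _, hE ω hω⟩
        · intro ω _ _
          exact Finset.prod_nonneg fun i _ => hρ.1 (ω i)
    _ ≤ _ := chernoff_ub ρ hρ f hf ht k

lemma chernoff_lb' (ρ : A → ℝ) (hρ : IsMixed ρ) (f : A → ℝ)
    (hf : ∀ a, f a ∈ Set.Icc (0:ℝ) 1) {t : ℝ} (ht : 0 ≤ t) (k : ℕ)
    (E : Finset (Fin k → A))
    (hE : ∀ ω ∈ E, ∑ i, f (ω i) < (k:ℝ)*((∑ a, ρ a * f a) - t)) :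
    ∑ ω ∈ E, (∏ i, ρ (ω i)) ≤ Real.exp (-(2*(k:ℝ)*t^2)) := by
  classical
  calc ∑ ω ∈ E, (∏ i, ρ (ω i))
      ≤ ∑ ω ∈ Finset.univ.filter
          (fun ω : Fin k → A => ∑ i, f (ω i) < (k:ℝ)*((∑ a, ρ a * f a) - t)),
        (∏ i, ρ (ω i)) := by
        apply Finset.sum_le_sum_of_subset_of_nonneg
        · intro ω hω
          exact Finset.mem_filter.mpr ⟨Finset.mem_univ _, hE ω hω⟩
        · intro ω _ _
          exact Finset.prod_nonneg fun i _ => hρ.1 (ω i)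
    _ ≤ _ := chernoff_lb ρ hρ f hf ht k

lemma sampling_lemma (u0 u1 : A → A → ℝ)
    (hbound : ∀ a b : A, u0 a b ∈ Set.Icc (0 : ℝ) 1 ∧ u1 a b ∈ Set.Icc (0 : ℝ) 1)
    {p₀ q₀ : A → ℝ} (hp₀ : IsMixed p₀) (hq₀ : IsMixed q₀)
    (hNash : IsNash u0 u1 p₀ q₀)
    {ε : ℝ} (hε0 : 0 < ε) {k : ℕ} (hk : 0 < k)
    (hp_small : (3 * (Fintype.card A : ℝ)) * Real.exp (-(2*(k:ℝ)*(ε/2)^2)) < 1)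
    (hq_small : (2 * (Fintype.card A : ℝ) + 2) * Real.exp (-(2*(k:ℝ)*(ε/2)^2)) < 1) :
    ∃ p q : A → ℝ, IsMixed p ∧ IsMixed q ∧ KUniform k p ∧ KUniform k q ∧
      (∀ a, EU u0 (pureStrat a) q ≤ EU u0 (pureStrat a) q₀ + ε/2) ∧
      (∀ a, EU u1 (pureStrat a) q₀ - ε/2 ≤ EU u1 (pureStrat a) q) ∧
      (∀ b, EU u1 p (pureStrat b) ≤ EU u1 p₀ (pureStrat b) + ε/2) ∧
      (∀ b, EU u0 p₀ (pureStrat b) - ε/2 ≤ EU u0 p (pureStrat b)) ∧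
      (EU u0 p₀ q₀ - ε/2 ≤ EU u0 p q) ∧
      (EU u1 p q ≤ EU u1 p₀ q₀ + ε/2) ∧
      (EU u1 p₀ q₀ - ε/2 ≤ EU u1 p q) ∧
      (EU u0 p q ≤ EU u0 p₀ q₀ + ε/2) := by
  classical
  have hkR : (0:ℝ) < (k:ℝ) := by exact_mod_cast hk
  have ht : (0:ℝ) ≤ ε/2 := by linarith
  set β := Real.exp (-(2*(k:ℝ)*(ε/2)^2)) with hβ
  -- ===== Stage 1 : sample the row player =====
  set P1 : ((A ⊕ A) ⊕ A) → (Fin k → A) → Prop := fun c ω =>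
    match c with
    | .inl (.inl b) => (k:ℝ)*(EU u1 p₀ (pureStrat b) + ε/2) < ∑ i, u1 (ω i) b
    | .inl (.inr b) => ∑ i, u1 (ω i) b < (k:ℝ)*(EU u1 p₀ (pureStrat b) - ε/2)
    | .inr b => ∑ i, u0 (ω i) b < (k:ℝ)*(EU u0 p₀ (pureStrat b) - ε/2)
    with hP1
  have hWp0 : ∀ ω : Fin k → A, 0 ≤ ∏ i, p₀ (ω i) :=
    fun ω => Finset.prod_nonneg fun i _ => hp₀.1 (ω i)
  have hP1bound : ∀ c, ∑ ω ∈ Finset.univ.filter (P1 c), (∏ i, p₀ (ω i)) ≤ β := by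
    rintro ((b | b) | b)
    · apply chernoff_ub' p₀ hp₀ (fun a => u1 a b) (fun a => (hbound a b).2) ht k
      intro ω hω
      have h : (k:ℝ)*(EU u1 p₀ (pureStrat b) + ε/2) < ∑ i, u1 (ω i) b :=
        (Finset.mem_filter.mp hω).2
      rw [EU_pure_right] at h
      simpa using h
    · apply chernoff_lb' p₀ hp₀ (fun a => u1 a b) (fun a => (hbound a b).2) ht k
      intro ω hω
      have h : ∑ i, u1 (ω i) b < (k:ℝ)*(EU u1 p₀ (pureStrat b) - ε/2) :=
        (Finset.mem_filter.mp hω).2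
      rw [EU_pure_right] at h
      simpa using h
    · apply chernoff_lb' p₀ hp₀ (fun a => u0 a b) (fun a => (hbound a b).1) ht k
      intro ω hω
      have h : ∑ i, u0 (ω i) b < (k:ℝ)*(EU u0 p₀ (pureStrat b) - ε/2) :=
        (Finset.mem_filter.mp hω).2
      rw [EU_pure_right] at h
      simpa using h
  have hbad1 : ∑ ω ∈ Finset.univ.filter (fun ω => ∃ c, P1 c ω), (∏ i, p₀ (ω i)) < 1 := by
    calc ∑ ω ∈ Finset.univ.filter (fun ω => ∃ c, P1 c ω), (∏ i, p₀ (ω i))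
        ≤ (Fintype.card ((A ⊕ A) ⊕ A) : ℝ) * β := union_bound _ hWp0 P1 β hP1bound
      _ = 3 * (Fintype.card A : ℝ) * β := by
          have hc : Fintype.card ((A ⊕ A) ⊕ A) = 3 * Fintype.card A := by
            simp [Fintype.card_sum]
            ring
          rw [hc]
          push_cast
          ring
      _ < 1 := hp_small
  obtain ⟨ωp, hωpGood, hωpPos⟩ := exists_good _ hWp0 (sum_prod_weights p₀ hp₀ k) _ hbad1
  push_neg at hωpGood
  have hωpSupp : ∀ i, p₀ (ωp i) ≠ 0 := by
    have := ne_of_gt hωpPos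
    rw [Finset.prod_ne_zero_iff] at this
    exact fun i => this i (Finset.mem_univ i)
  set p := emp ωp with hpdef
  have hpmix : IsMixed p := emp_isMixed hk ωp
  have hpsupp : ∀ a, p₀ a = 0 → p a = 0 := emp_support hωpSupp
  have hGa : ∀ b, EU u1 p (pureStrat b) ≤ EU u1 p₀ (pureStrat b) + ε/2 := by
    intro b
    have h : ¬ ((k:ℝ)*(EU u1 p₀ (pureStrat b) + ε/2) < ∑ i, u1 (ωp i) b) :=
      hωpGood (Sum.inl (Sum.inl b))
    push_neg at h
    rw [hpdef, EU_emp_pure hk, div_le_iff₀ hkR]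
    linarith
  have hGb : ∀ b, EU u1 p₀ (pureStrat b) - ε/2 ≤ EU u1 p (pureStrat b) := by
    intro b
    have h : ¬ (∑ i, u1 (ωp i) b < (k:ℝ)*(EU u1 p₀ (pureStrat b) - ε/2)) :=
      hωpGood (Sum.inl (Sum.inr b))
    push_neg at h
    rw [hpdef, EU_emp_pure hk, le_div_iff₀ hkR]
    linarith
  have hGc : ∀ b, EU u0 p₀ (pureStrat b) - ε/2 ≤ EU u0 p (pureStrat b) := by
    intro b
    have h : ¬ (∑ i, u0 (ωp i) b < (k:ℝ)*(EU u0 p₀ (pureStrat b) - ε/2)) :=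
      hωpGood (Sum.inr b)
    push_neg at h
    rw [hpdef, EU_emp_pure hk, le_div_iff₀ hkR]
    linarith
  -- ===== Stage 2 : sample the column player =====
  set gp : A → ℝ := fun b => EU u0 p (pureStrat b) with hgp
  have hgp01 : ∀ b, gp b ∈ Set.Icc (0:ℝ) 1 := fun b =>
    EU_mem_Icc u0 (fun a b => (hbound a b).1) hpmix (isMixed_pure b)
  have hgpmean : ∑ b, q₀ b * gp b = EU u0 p₀ q₀ := by
    rw [hgp, ← EU_eq_sum_right]
    exact eval_support_left hp₀ hNash hpmix hpsupp
  set P2 : ((A ⊕ A) ⊕ Fin 2) → (Fin k → A) → Prop := fun c ω =>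
    match c with
    | .inl (.inl a) => (k:ℝ)*(EU u0 (pureStrat a) q₀ + ε/2) < ∑ j, u0 a (ω j)
    | .inl (.inr a) => ∑ j, u1 a (ω j) < (k:ℝ)*(EU u1 (pureStrat a) q₀ - ε/2)
    | .inr i => if i = 0 then ∑ j, gp (ω j) < (k:ℝ)*(EU u0 p₀ q₀ - ε/2)
        else (k:ℝ)*(EU u0 p₀ q₀ + ε/2) < ∑ j, gp (ω j)
    with hP2
  have hWq0 : ∀ ω : Fin k → A, 0 ≤ ∏ j, q₀ (ω j) :=
    fun ω => Finset.prod_nonneg fun j _ => hq₀.1 (ω j)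
  have hP2bound : ∀ c, ∑ ω ∈ Finset.univ.filter (P2 c), (∏ j, q₀ (ω j)) ≤ β := by
    rintro ((a | a) | i)
    · apply chernoff_ub' q₀ hq₀ (fun b => u0 a b) (fun b => (hbound a b).1) ht k
      intro ω hω
      have h : (k:ℝ)*(EU u0 (pureStrat a) q₀ + ε/2) < ∑ j, u0 a (ω j) :=
        (Finset.mem_filter.mp hω).2
      rw [EU_pure_left] at h
      simpa using h
    · apply chernoff_lb' q₀ hq₀ (fun b => u1 a b) (fun b => (hbound a b).2) ht k
      intro ω hω
      have h : ∑ j, u1 a (ω j) < (k:ℝ)*(EU u1 (pureStrat a) q₀ - ε/2) :=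
        (Finset.mem_filter.mp hω).2
      rw [EU_pure_left] at h
      simpa using h
    · fin_cases i
      · apply chernoff_lb' q₀ hq₀ gp hgp01 ht k
        intro ω hω
        have h : ∑ j, gp (ω j) < (k:ℝ)*(EU u0 p₀ q₀ - ε/2) := (Finset.mem_filter.mp hω).2
        rw [hgpmean]
        exact h
      · apply chernoff_ub' q₀ hq₀ gp hgp01 ht k
        intro ω hω
        have h : (k:ℝ)*(EU u0 p₀ q₀ + ε/2) < ∑ j, gp (ω j) := (Finset.mem_filter.mp hω).2
        rw [hgpmean]
        exact h
  have hbad2 : ∑ ω ∈ Finset.univ.filter (fun ω => ∃ c, P2 c ω), (∏ j, q₀ (ω j)) < 1 := by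
    calc ∑ ω ∈ Finset.univ.filter (fun ω => ∃ c, P2 c ω), (∏ j, q₀ (ω j))
        ≤ (Fintype.card ((A ⊕ A) ⊕ Fin 2) : ℝ) * β := union_bound _ hWq0 P2 β hP2bound
      _ = (2 * (Fintype.card A : ℝ) + 2) * β := by
          have hc : Fintype.card ((A ⊕ A) ⊕ Fin 2) = 2 * Fintype.card A + 2 := by
            simp [Fintype.card_sum]
            ring
          rw [hc]
          push_cast
          ring
      _ < 1 := hq_small
  obtain ⟨ωq, hωqGood, hωqPos⟩ := exists_good _ hWq0 (sum_prod_weights q₀ hq₀ k) _ hbad2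
  push_neg at hωqGood
  have hωqSupp : ∀ j, q₀ (ωq j) ≠ 0 := by
    have := ne_of_gt hωqPos
    rw [Finset.prod_ne_zero_iff] at this
    exact fun j => this j (Finset.mem_univ j)
  set q := emp ωq with hqdef
  have hqmix : IsMixed q := emp_isMixed hk ωq
  have hqsupp : ∀ b, q₀ b = 0 → q b = 0 := emp_support hωqSupp
  -- conditions coming from stage 2
  have hFa : ∀ a, EU u0 (pureStrat a) q ≤ EU u0 (pureStrat a) q₀ + ε/2 := by
    intro a
    have h : ¬ ((k:ℝ)*(EU u0 (pureStrat a) q₀ + ε/2) < ∑ j, u0 a (ωq j)) :=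
      hωqGood (Sum.inl (Sum.inl a))
    push_neg at h
    rw [hqdef, EU_pure_emp hk, div_le_iff₀ hkR]
    linarith
  have hFc : ∀ a, EU u1 (pureStrat a) q₀ - ε/2 ≤ EU u1 (pureStrat a) q := by
    intro a
    have h : ¬ (∑ j, u1 a (ωq j) < (k:ℝ)*(EU u1 (pureStrat a) q₀ - ε/2)) :=
      hωqGood (Sum.inl (Sum.inr a))
    push_neg at h
    rw [hqdef, EU_pure_emp hk, le_div_iff₀ hkR]
    linarith
  have hEUpq : EU u0 p q = (∑ j, gp (ωq j)) / k := by
    rw [EU_eq_sum_right, hqdef]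
    exact emp_avg hk ωq gp
  have h5 : EU u0 p₀ q₀ - ε/2 ≤ EU u0 p q := by
    have h : ¬ (∑ j, gp (ωq j) < (k:ℝ)*(EU u0 p₀ q₀ - ε/2)) := hωqGood (Sum.inr 0)
    push_neg at h
    rw [hEUpq, le_div_iff₀ hkR]
    linarith
  have h8 : EU u0 p q ≤ EU u0 p₀ q₀ + ε/2 := by
    have h : ¬ ((k:ℝ)*(EU u0 p₀ q₀ + ε/2) < ∑ j, gp (ωq j)) := hωqGood (Sum.inr 1)
    push_neg at h
    rw [hEUpq, div_le_iff₀ hkR]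
    linarith
  -- conditions h6/h7 by averaging the stage-1 families over `q`
  have h6 : EU u1 p q ≤ EU u1 p₀ q₀ + ε/2 := by
    calc EU u1 p q = ∑ b, q b * EU u1 p (pureStrat b) := EU_eq_sum_right u1 p q
      _ ≤ ∑ b, q b * (EU u1 p₀ (pureStrat b) + ε/2) :=
          Finset.sum_le_sum fun b _ => mul_le_mul_of_nonneg_left (hGa b) (hqmix.1 b)
      _ = (∑ b, q b * EU u1 p₀ (pureStrat b)) + (∑ b, q b) * (ε/2) := by
          rw [Finset.sum_mul, ← Finset.sum_add_distrib]
          exact Finset.sum_congr rfl fun b _ => by ring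
      _ = EU u1 p₀ q + ε/2 := by rw [hqmix.2, ← EU_eq_sum_right, one_mul]
      _ = EU u1 p₀ q₀ + ε/2 := by rw [eval_support_right hq₀ hNash hqmix hqsupp]
  have h7 : EU u1 p₀ q₀ - ε/2 ≤ EU u1 p q := by
    have hc : EU u1 p₀ q - ε/2 ≤ EU u1 p q := by
      calc EU u1 p₀ q - ε/2 = (∑ b, q b * EU u1 p₀ (pureStrat b)) - (∑ b, q b) * (ε/2) := by
            rw [hqmix.2, ← EU_eq_sum_right, one_mul]
        _ = ∑ b, q b * (EU u1 p₀ (pureStrat b) - ε/2) := by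
            rw [Finset.sum_mul, ← Finset.sum_sub_distrib]
            exact Finset.sum_congr rfl fun b _ => by ring
        _ ≤ ∑ b, q b * EU u1 p (pureStrat b) :=
            Finset.sum_le_sum fun b _ => mul_le_mul_of_nonneg_left (hGb b) (hqmix.1 b)
        _ = EU u1 p q := (EU_eq_sum_right u1 p q).symm
    rw [eval_support_right hq₀ hNash hqmix hqsupp] at hc
    exact hc
  exact ⟨p, q, hpmix, hqmix, emp_kUniform ωp, emp_kUniform ωq,
    hFa, hFc, hGa, hGc, h5, h6, h7, h8⟩

end SamplingMain
section Numeric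

lemma exp_two_lt : Real.exp 2 < 8 := by
  have h1 := Real.exp_one_lt_d9
  have h2 : Real.exp 2 = Real.exp 1 ^ 2 := by
    rw [← Real.exp_nat_mul]; norm_num
  rw [h2]
  nlinarith [Real.exp_pos 1]

lemma exp_three_lt : Real.exp 3 < 21 := by
  have h1 := Real.exp_one_lt_d9
  have h2 : Real.exp 3 = Real.exp 1 ^ 3 := by
    rw [← Real.exp_nat_mul]; norm_num
  rw [h2]
  have h3 : Real.exp 1 ^ 3 < (2.7182818286:ℝ)^3 :=
    pow_lt_pow_left₀ h1 (Real.exp_pos 1).le (by norm_num)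
  nlinarith [h3]

lemma log_two_gt : (2:ℝ)/3 < Real.log 2 := by
  rw [Real.lt_log_iff_exp_lt (by norm_num)]
  have h : Real.exp (2/3) ^ (3:ℕ) = Real.exp 2 := by
    rw [← Real.exp_nat_mul]; norm_num
  by_contra hcon
  push_neg at hcon
  have h8 : (2:ℝ)^(3:ℕ) ≤ Real.exp (2/3) ^ (3:ℕ) := pow_le_pow_left₀ (by norm_num) hcon 3
  rw [h] at h8
  norm_num at h8
  linarith [exp_two_lt]

lemma log_five_gt : (3:ℝ)/2 < Real.log 5 := by
  rw [Real.lt_log_iff_exp_lt (by norm_num)]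
  have h : Real.exp (3/2) ^ (2:ℕ) = Real.exp 3 := by
    rw [← Real.exp_nat_mul]; norm_num
  by_contra hcon
  push_neg at hcon
  have h25 : (5:ℝ)^(2:ℕ) ≤ Real.exp (3/2) ^ (2:ℕ) := pow_le_pow_left₀ (by norm_num) hcon 2
  rw [h] at h25
  norm_num at h25
  linarith [exp_three_lt]

lemma small_n_bound {n : ℕ} (h2 : 2 ≤ n) (h9 : n ≤ 9) : (n:ℝ) < 6 * Real.log n := by
  rcases le_or_gt n 4 with h | h
  · have hlog : Real.log 2 ≤ Real.log n := by
      apply Real.log_le_log (by norm_num)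
      exact_mod_cast h2
    have hn4 : (n:ℝ) ≤ 4 := by exact_mod_cast h
    nlinarith [log_two_gt]
  · have h5 : (5:ℝ) ≤ (n:ℝ) := by exact_mod_cast h
    have hlog : Real.log 5 ≤ Real.log n := by
      apply Real.log_le_log (by norm_num)
      exact h5
    have hn9 : (n:ℝ) ≤ 9 := by exact_mod_cast h9
    nlinarith [log_five_gt]

end Numeric

set_option maxHeartbeats 1600000 in
/-- if a game with common action set of size `n ≥ 2` and `[0,1]`-valued
utilities admits an `ε_ef`-envy-proof Nash equilibrium, then for every `0 < ε < 1` and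
every `k ≥ 3 ln n / ε²` there is a `k`-uniform `(2ε+ε_ef)`-envy-proof `ε`-Nash
equilibrium. -/
theorem exists_kUniform_apx_envyProof_apx_nash
    {A : Type*} [Fintype A] [DecidableEq A] [Nonempty A]
    (u0 u1 : A → A → ℝ)
    (hn : 2 ≤ Fintype.card A)
    (hbound : ∀ a b : A, u0 a b ∈ Set.Icc (0 : ℝ) 1 ∧ u1 a b ∈ Set.Icc (0 : ℝ) 1)
    (εef : ℝ) (hεef : 0 ≤ εef)
    (p₀ q₀ : A → ℝ) (hp₀ : IsMixed p₀) (hq₀ : IsMixed q₀)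
    (hNash : IsNash u0 u1 p₀ q₀) (hEP : IsEpsEnvyProof u0 u1 εef p₀ q₀)
    (ε : ℝ) (hε0 : 0 < ε) (hε1 : ε < 1)
    (k : ℕ) (hk : 3 * Real.log (Fintype.card A) / ε ^ 2 ≤ (k : ℝ)) :
    ∃ (p q : A → ℝ), IsMixed p ∧ IsMixed q ∧ KUniform k p ∧ KUniform k q ∧
      IsEpsNash u0 u1 ε p q ∧ IsEpsEnvyProof u0 u1 (2 * ε + εef) p q := by
  have hu0 : ∀ a b, u0 a b ∈ Set.Icc (0:ℝ) 1 := fun a b => (hbound a b).1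
  have hu1 : ∀ a b, u1 a b ∈ Set.Icc (0:ℝ) 1 := fun a b => (hbound a b).2
  set n : ℕ := Fintype.card A with hndef
  have hnR : (2:ℝ) ≤ (n:ℝ) := by exact_mod_cast hn
  have hlogpos : 0 < Real.log n := Real.log_pos (by linarith)
  have hε2 : 0 < ε ^ 2 := by positivity
  have hkpos : 0 < k := by
    rcases Nat.eq_zero_or_pos k with h0 | h
    · exfalso
      rw [h0] at hk
      have hpos : 0 < 3 * Real.log n / ε ^ 2 := by positivity
      simp only [Nat.cast_zero] at hk
      linarith
    · exact h
  have hkR : (0:ℝ) < (k:ℝ) := by exact_mod_cast hkpos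
  have hkε2 : 3 * Real.log n ≤ (k:ℝ) * ε ^ 2 := by
    rw [div_le_iff₀ hε2] at hk
    linarith
  by_cases hcase : (n:ℝ) / (2 * k) ≤ ε
  -- ========== Case A : deterministic rounding ==========
  · obtain ⟨p, hpmix, hpuni, hpsupp, hpL1⟩ := round_lemma p₀ hp₀ k hkpos
    obtain ⟨q, hqmix, hquni, hqsupp, hqL1⟩ := round_lemma q₀ hq₀ k hkpos
    have hL1p : ∑ a, |p a - p₀ a| ≤ ε := le_trans hpL1 hcase
    have hL1q : ∑ b, |q b - q₀ b| ≤ ε := le_trans hqL1 hcase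
    have habsp : ∑ a, |p₀ a - p a| = ∑ a, |p a - p₀ a| :=
      Finset.sum_congr rfl fun a _ => abs_sub_comm _ _
    have habsq : ∑ b, |q₀ b - q b| = ∑ b, |q b - q₀ b| :=
      Finset.sum_congr rfl fun b _ => abs_sub_comm _ _
    have hq0v : EU u0 p q₀ = EU u0 p₀ q₀ := eval_support_left hp₀ hNash hpmix hpsupp
    have hq1v : EU u1 p₀ q = EU u1 p₀ q₀ := eval_support_right hq₀ hNash hqmix hqsupp
    have h1 : ∀ a, EU u0 (pureStrat a) q ≤ EU u0 (pureStrat a) q₀ + ε/2 := by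
      intro a
      have := EU_perturb_right u0 hu0 (isMixed_pure a) hq₀ hqmix
      linarith
    have h2 : ∀ a, EU u1 (pureStrat a) q₀ - ε/2 ≤ EU u1 (pureStrat a) q := by
      intro a
      have := EU_perturb_right u1 hu1 (isMixed_pure a) hqmix hq₀
      rw [habsq] at this
      linarith
    have h3 : ∀ b, EU u1 p (pureStrat b) ≤ EU u1 p₀ (pureStrat b) + ε/2 := by
      intro b
      have := EU_perturb_left u1 hu1 hp₀ hpmix (isMixed_pure b)
      linarith
    have h4 : ∀ b, EU u0 p₀ (pureStrat b) - ε/2 ≤ EU u0 p (pureStrat b) := by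
      intro b
      have := EU_perturb_left u0 hu0 hpmix hp₀ (isMixed_pure b)
      rw [habsp] at this
      linarith
    have h5 : EU u0 p₀ q₀ - ε/2 ≤ EU u0 p q := by
      have := EU_perturb_right u0 hu0 hpmix hqmix hq₀
      rw [habsq] at this
      linarith [hq0v]
    have h8 : EU u0 p q ≤ EU u0 p₀ q₀ + ε/2 := by
      have := EU_perturb_right u0 hu0 hpmix hq₀ hqmix
      linarith [hq0v]
    have h6 : EU u1 p q ≤ EU u1 p₀ q₀ + ε/2 := by
      have := EU_perturb_left u1 hu1 hp₀ hpmix hqmix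
      linarith [hq1v]
    have h7 : EU u1 p₀ q₀ - ε/2 ≤ EU u1 p q := by
      have := EU_perturb_left u1 hu1 hpmix hp₀ hqmix
      rw [habsp] at this
      linarith [hq1v]
    obtain ⟨hN', hE'⟩ := interface_lemma u0 u1 εef p₀ q₀ hNash hEP ε p q
      h1 h2 h3 h4 h5 h6 h7 h8
    exact ⟨p, q, hpmix, hqmix, hpuni, hquni, hN', hE'⟩
  -- ========== Case B : probabilistic construction ==========
  · push_neg at hcase
    rw [lt_div_iff₀ (by positivity : (0:ℝ) < 2*(k:ℝ))] at hcase
    -- hcase : ε * (2 * k) < n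
    have hklog : 3 * Real.log n < (k:ℝ) := by
      have hεsq : ε^2 < 1 := by nlinarith [hε0, hε1]
      have h1 : 3 * Real.log n < 3 * Real.log n / ε ^ 2 := by
        rw [lt_div_iff₀ hε2]
        nlinarith [hlogpos, hεsq]
      linarith
    have h6log : 6 * Real.log n < (n:ℝ) := by
      have ha : (0:ℝ) < (n:ℝ) + 2*(k:ℝ)*ε := by positivity
      have s1 : 4*(k:ℝ)^2*ε^2 < (n:ℝ)^2 := by nlinarith [hcase, ha]
      have s2 : 4*(k:ℝ)*(3*Real.log n) ≤ 4*(k:ℝ)^2*ε^2 := by nlinarith [hkε2, hkR]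
      have s3 : 36*(Real.log n)^2 < 4*(k:ℝ)*(3*Real.log n) := by nlinarith [hklog, hlogpos]
      have hsq : 36 * (Real.log n)^2 < (n:ℝ)^2 := by linarith
      nlinarith [hlogpos, hnR]
    have hn10 : (10:ℕ) ≤ n := by
      by_contra hc
      push_neg at hc
      have := small_n_bound hn (by omega)
      linarith
    have hn10R : (10:ℝ) ≤ (n:ℝ) := by exact_mod_cast hn10
    set β := Real.exp (-(2*(k:ℝ)*(ε/2)^2)) with hβ
    have hβpos : 0 < β := Real.exp_pos _
    have hβsq : β^2 ≤ 1/(n:ℝ)^3 := by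
      have h1 : β^2 = Real.exp (-((k:ℝ) * ε^2)) := by
        rw [hβ, ← Real.exp_nat_mul]
        congr 1
        ring
      have h2 : Real.exp (-((k:ℝ) * ε^2)) ≤ Real.exp (-(3 * Real.log n)) :=
        Real.exp_le_exp.mpr (by linarith)
      have h3 : Real.exp (-(3 * Real.log n)) = 1/(n:ℝ)^3 := by
        rw [Real.exp_neg, one_div]
        congr 1
        rw [show (3:ℝ) * Real.log n = ((3:ℕ):ℝ) * Real.log n by norm_num,
          Real.exp_nat_mul, Real.exp_log (by linarith)]
      calc β^2 = Real.exp (-((k:ℝ) * ε^2)) := h1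
        _ ≤ Real.exp (-(3 * Real.log n)) := h2
        _ = 1/(n:ℝ)^3 := h3
    have hn3 : (0:ℝ) < (n:ℝ)^3 := by positivity
    have hp_small : 3 * (n:ℝ) * β < 1 := by
      have hsq : (3*(n:ℝ)*β)^2 ≤ 9*(n:ℝ)^2/(n:ℝ)^3 := by
        calc (3*(n:ℝ)*β)^2 = 9*(n:ℝ)^2*β^2 := by ring
          _ ≤ 9*(n:ℝ)^2*(1/(n:ℝ)^3) := by nlinarith [hβsq, hnR]
          _ = 9*(n:ℝ)^2/(n:ℝ)^3 := by ring
      have hn2pos : (0:ℝ) < (n:ℝ)^2 := by positivity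
      have hlt : 9*(n:ℝ)^2/(n:ℝ)^3 < 1 := by
        rw [div_lt_one hn3]
        nlinarith [hn10R, hn2pos]
      have ha : 0 < 3*(n:ℝ)*β := by positivity
      nlinarith [hsq, hlt, ha]
    have hq_small : (2 * (n:ℝ) + 2) * β < 1 := by
      have hsq : ((2*(n:ℝ)+2)*β)^2 ≤ (2*(n:ℝ)+2)^2/(n:ℝ)^3 := by
        calc ((2*(n:ℝ)+2)*β)^2 = (2*(n:ℝ)+2)^2*β^2 := by ring
          _ ≤ (2*(n:ℝ)+2)^2*(1/(n:ℝ)^3) := by nlinarith [hβsq, hnR]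
          _ = (2*(n:ℝ)+2)^2/(n:ℝ)^3 := by ring
      have hn2pos : (0:ℝ) < (n:ℝ)^2 := by positivity
      have hlt : (2*(n:ℝ)+2)^2/(n:ℝ)^3 < 1 := by
        rw [div_lt_one hn3]
        nlinarith [hn10R, hn2pos]
      have ha : 0 < (2*(n:ℝ)+2)*β := by positivity
      nlinarith [hsq, hlt, ha]
    obtain ⟨p, q, hpmix, hqmix, hpuni, hquni, h1, h2, h3, h4, h5, h6, h7, h8⟩ :=
      sampling_lemma u0 u1 hbound hp₀ hq₀ hNash hε0 hkpos hp_small hq_small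
    obtain ⟨hN', hE'⟩ := interface_lemma u0 u1 εef p₀ q₀ hNash hEP ε p q
      h1 h2 h3 h4 h5 h6 h7 h8
    exact ⟨p, q, hpmix, hqmix, hpuni, hquni, hN', hE'⟩
end
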